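/- arXiv:1510.06077 — 4 statements merged into one kernel-verified Lean document; each statement's English description precedes it below -/
import Mathlib

section
/- Let U : (0,∞) → ℝ be continuously differentiable with 0 < U(s) < 1 for all s > 0, U(s) → 0 as s → 0⁺, and suppose U satisfies the integral equation U(s)^2 + U(s) = (2/s) ∫₀^s U(r) dr for all s > 0. Then there is a constant C > 0 such that U(s)/(1-U(s))^3 = C·s for all s > 0. -/
open Filter Set Topology intervalIntegral

/-- If `U` is `C¹` on `(0,∞)`, with `0 < U < 1`, `U(0⁺) = 0`, and satisfies the integral
equation `U(s)² + U(s) = (2/s) ∫₀ˢ U(r) dr`, then `U(s)/(1-U(s))³ = C s` for some `C > 0`. -/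
theorem stmt1 (U : ℝ → ℝ)
    (hC1 : ContDiffOn ℝ 1 U (Set.Ioi 0))
    (hbd : ∀ s : ℝ, 0 < s → 0 < U s ∧ U s < 1)
    (hlim : Tendsto U (𝓝[>] (0 : ℝ)) (𝓝 0))
    (heq : ∀ s : ℝ, 0 < s → U s ^ 2 + U s = (2 / s) * ∫ r in (0:ℝ)..s, U r) :
    ∃ C : ℝ, 0 < C ∧ ∀ s : ℝ, 0 < s → U s / (1 - U s) ^ 3 = C * s := by
  have hcont : ContinuousOn U (Set.Ioi 0) := hC1.continuousOn
  have hUd : ∀ s : ℝ, 0 < s → HasDerivAt U (deriv U s) s := fun s hs =>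
    ((hC1.differentiableOn one_ne_zero).differentiableAt (isOpen_Ioi.mem_nhds hs)).hasDerivAt
  -- the key ODE
  have key : ∀ s : ℝ, 0 < s → s * deriv U s * (2 * U s + 1) = U s - U s ^ 2 := by
    intro s hs
    have hint : IntervalIntegrable U MeasureTheory.volume 0 s := by
      rw [intervalIntegrable_iff_integrableOn_Ioc_of_le hs.le]
      have meas : MeasureTheory.AEStronglyMeasurable U
          (MeasureTheory.volume.restrict (Ioc 0 s)) :=
        (hcont.mono Ioc_subset_Ioi_self).aestronglyMeasurable measurableSet_Ioc
      have hone : MeasureTheory.IntegrableOn (fun _ : ℝ => (1:ℝ)) (Ioc 0 s) :=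
        MeasureTheory.integrableOn_const measure_Ioc_lt_top.ne
      refine MeasureTheory.Integrable.mono' hone meas ?_
      filter_upwards [MeasureTheory.ae_restrict_mem measurableSet_Ioc] with x hx
      have h1 := hbd x hx.1
      rw [Real.norm_eq_abs, abs_of_pos h1.1]
      exact h1.2.le
    have hV : HasDerivAt (fun t => ∫ r in (0:ℝ)..t, U r) (U s) s :=
      intervalIntegral.integral_hasDerivAt_right hint
        (hcont.stronglyMeasurableAtFilter isOpen_Ioi s hs)
        (hcont.continuousAt (isOpen_Ioi.mem_nhds hs))
    have hf : HasDerivAt (fun t => t * (U t ^ 2 + U t))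
        (1 * (U s ^ 2 + U s) +
          s * ((2 : ℕ) * U s ^ (2 - 1) * deriv U s + deriv U s)) s :=
      (hasDerivAt_id s).mul (((hUd s hs).pow 2).add (hUd s hs))
    have heqn : (fun t => t * (U t ^ 2 + U t)) =ᶠ[𝓝 s]
        fun t => 2 * ∫ r in (0:ℝ)..t, U r := by
      filter_upwards [isOpen_Ioi.mem_nhds hs] with t ht
      have h := heq t ht
      have ht' : (t : ℝ) ≠ 0 := ne_of_gt ht
      field_simp at h
      linarith [h]
    have hf2 : HasDerivAt (fun t => t * (U t ^ 2 + U t)) (2 * U s) s :=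
      (hV.const_mul 2).congr_of_eventuallyEq heqn
    have huniq := hf.unique hf2
    push_cast at huniq
    nlinarith [huniq]
  -- G is constant
  set G : ℝ → ℝ := fun t => U t / ((1 - U t) ^ 3 * t) with hG
  have hGderiv : ∀ s : ℝ, 0 < s → HasDerivAt G 0 s := by
    intro s hs
    obtain ⟨hU0, hU1⟩ := hbd s hs
    have h1 : (0:ℝ) < 1 - U s := by linarith
    have hden : (1 - U s) ^ 3 * s ≠ 0 := by positivity
    have hD : HasDerivAt (fun t => (1 - U t) ^ 3 * t)
        (((3 : ℕ) * (1 - U s) ^ (3 - 1) * (0 - deriv U s)) * s + (1 - U s) ^ 3 * 1) s :=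
      (((hasDerivAt_const s (1:ℝ)).sub (hUd s hs)).pow 3).mul (hasDerivAt_id s)
    have := (hUd s hs).div hD hden
    refine this.congr_deriv ?_
    have hk := key s hs
    push_cast
    field_simp
    ring_nf
    ring_nf at hk
    nlinarith [hk]
  have hGdiff : DifferentiableOn ℝ G (Set.Ioi 0) := fun x hx =>
    ((hGderiv x hx).differentiableAt).differentiableWithinAt
  have hGconst : ∀ s : ℝ, 0 < s → G s = G 1 := by
    intro s hs
    apply (convex_Ioi (0:ℝ)).is_const_of_fderivWithin_eq_zero hGdiff _ hs (by norm_num)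
    intro x hx
    rw [fderivWithin_of_isOpen isOpen_Ioi hx]
    have h0 : (ContinuousLinearMap.smulRight (1 : ℝ →L[ℝ] ℝ) (0:ℝ)) = 0 := by
      ext; simp
    rw [← h0]
    exact (hGderiv x hx).hasFDerivAt.fderiv
  refine ⟨G 1, ?_, ?_⟩
  · obtain ⟨h0, h1⟩ := hbd 1 one_pos
    have h1 : (0:ℝ) < 1 - U 1 := by linarith
    have : (0:ℝ) < (1 - U 1) ^ 3 * 1 := by positivity
    exact div_pos h0 this
  · intro s hs
    have h := hGconst s hs
    obtain ⟨hU0, hU1⟩ := hbd s hs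
    have h1 : (0:ℝ) < 1 - U s := by linarith
    have hden : ((1 - U s) ^ 3 : ℝ) ≠ 0 := by positivity
    rw [← h]
    simp only [hG]
    field_simp
end

section
/- Define U⋆(s) = (1/√s)·( ((√(s+s₀)+√s)/2)^{1/3} − ((√(s+s₀)−√s)/2)^{1/3} )³ with s₀ = 4/27. Then for all s > 0, U⋆(s)/(1 − U⋆(s))³ = s. -/
open Real

lemma cube_rpow_third {x : ℝ} (hx : 0 ≤ x) : (x ^ ((1:ℝ)/3)) ^ 3 = x := by
  rw [← Real.rpow_natCast (x ^ ((1:ℝ)/3)) 3, ← Real.rpow_mul hx]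
  norm_num

/-- The explicit formula
`U⋆(s) = (1/√s) ((((√(s+4/27)+√s)/2)^(1/3) - ((√(s+4/27)-√s)/2)^(1/3))³`
satisfies `U⋆(s)/(1-U⋆(s))³ = s` for all `s > 0`. -/
theorem stmt2 :
    ∀ s : ℝ, 0 < s →
      letI s₀ : ℝ := 4 / 27
      letI U : ℝ :=
        (1 / Real.sqrt s) *
          (((Real.sqrt (s + s₀) + Real.sqrt s) / 2) ^ ((1:ℝ)/3) -
            ((Real.sqrt (s + s₀) - Real.sqrt s) / 2) ^ ((1:ℝ)/3)) ^ 3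
      U / (1 - U) ^ 3 = s := by
  intro s hs
  set S := Real.sqrt s with hS
  set A := Real.sqrt (s + 4/27) with hA
  have hSpos : 0 < S := Real.sqrt_pos.mpr hs
  have hSsq : S ^ 2 = s := Real.sq_sqrt hs.le
  have hAsq : A ^ 2 = s + 4/27 := Real.sq_sqrt (by linarith)
  have hAS : S ≤ A := Real.sqrt_le_sqrt (by linarith)
  set a := ((A + S) / 2) ^ ((1:ℝ)/3) with ha
  set b := ((A - S) / 2) ^ ((1:ℝ)/3) with hb
  have ha3 : a ^ 3 = (A + S) / 2 := cube_rpow_third (by positivity)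
  have hb3 : b ^ 3 = (A - S) / 2 := cube_rpow_third (by linarith)
  have hann : 0 ≤ a := Real.rpow_nonneg (by positivity) _
  have hbnn : 0 ≤ b := Real.rpow_nonneg (by linarith) _
  have hab3 : (a * b) ^ 3 = 1 / 27 := by
    rw [mul_pow, ha3, hb3]
    have : (A + S) / 2 * ((A - S) / 2) = (A ^ 2 - S ^ 2) / 4 := by ring
    rw [this, hAsq, hSsq]; ring
  have hab : a * b = 1 / 3 := by
    nlinarith [mul_nonneg hann hbnn, sq_nonneg (a * b - 1/3), sq_nonneg (a * b + 1/3)]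
  set d := a - b with hd
  have hd3 : d ^ 3 = S - d := by
    have : d ^ 3 = a ^ 3 - b ^ 3 - 3 * (a * b) * (a - b) := by ring
    rw [this, ha3, hb3, hab]; ring
  have hdpos : 0 < d := by
    by_contra h
    push_neg at h
    have h3 : d ^ 3 ≤ 0 := Odd.pow_nonpos ⟨1, by norm_num⟩ h
    linarith
  have hSd : 0 < S - d := by rw [← hd3]; positivity
  show (1 / S) * d ^ 3 / (1 - (1 / S) * d ^ 3) ^ 3 = s
  rw [hd3]
  have h1 : 1 - 1 / S * (S - d) = d / S := by field_simp; ring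
  rw [h1]
  rw [div_pow, ← hd3]
  field_simp
  linear_combination hSsq
end

section
/- There is no finite nonzero measure F on (0,∞) whose Bernstein transform Ŭ(s) = ∫(1 − e^{−sx}) F(dx) satisfies Ŭ(s) = (1/s)·∫ (e^{−sx} − 1 + sx)/x · F(dx) for all s > 0. -/
open MeasureTheory Real

lemma stmt12_aux (x : ℝ) (hx : 0 < x) :
    0 < (1 - Real.exp (-1 * x)) - (Real.exp (-1 * x) - 1 + 1 * x) / x := by
  have hexp : x + 1 < Real.exp x := Real.add_one_lt_exp (ne_of_gt hx)
  have he : Real.exp (-1 * x) * Real.exp x = 1 := by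
    rw [← Real.exp_add]; norm_num
  rw [sub_pos, div_lt_iff₀ hx]
  nlinarith [Real.exp_pos (-1 * x), Real.exp_pos x,
    mul_lt_mul_of_pos_left hexp (Real.exp_pos (-1 * x))]

/-- No finite nonzero measure `F` on `(0,∞)` has Bernstein transform
`Ŭ(s) = ∫ (1 - e^{-sx}) dF(x)` satisfying
`Ŭ(s) = (1/s) ∫ (e^{-sx} - 1 + sx)/x dF(x)` for all `s > 0`. -/
theorem stmt12 (F : Measure ℝ) [IsFiniteMeasure F] (hne : F ≠ 0)
    (hsupp : F (Set.Ioi (0:ℝ))ᶜ = 0) :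
    ¬ (∀ s : ℝ, 0 < s →
        (∫ x, (1 - Real.exp (-s * x)) ∂F) =
          (1 / s) * ∫ x, (Real.exp (-s * x) - 1 + s * x) / x ∂F) := by
  intro h
  have h1 := h 1 one_pos
  rw [one_div_one, one_mul] at h1
  -- a.e. positivity of coordinate
  have hae : ∀ᵐ x ∂F, 0 < x := by
    rw [ae_iff]
    have hset : {x : ℝ | ¬ 0 < x} = (Set.Ioi (0:ℝ))ᶜ := by ext x; simp
    rw [hset, hsupp]
  set f : ℝ → ℝ := fun x => 1 - Real.exp (-1 * x) with hf
  set g : ℝ → ℝ := fun x => (Real.exp (-1 * x) - 1 + 1 * x) / x with hg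
  have hfm : AEStronglyMeasurable f F := by
    apply Measurable.aestronglyMeasurable
    fun_prop
  have hgm : AEStronglyMeasurable g F := by
    apply Measurable.aestronglyMeasurable
    fun_prop
  have hfb : ∀ᵐ x ∂F, ‖f x‖ ≤ 1 := by
    filter_upwards [hae] with x hx
    have h2 : Real.exp (-1 * x) ≤ 1 := by
      rw [Real.exp_le_one_iff]; nlinarith
    have h3 : 0 < Real.exp (-1 * x) := Real.exp_pos _
    simp only [hf, Real.norm_eq_abs]
    rw [abs_le]; constructor <;> nlinarith
  have hgb : ∀ᵐ x ∂F, ‖g x‖ ≤ 1 := by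
    filter_upwards [hae] with x hx
    have h2 : Real.exp (-1 * x) ≤ 1 := by
      rw [Real.exp_le_one_iff]; nlinarith
    have h4 : 1 - x ≤ Real.exp (-1 * x) := by
      have := Real.add_one_le_exp (-1 * x); nlinarith
    simp only [hg, Real.norm_eq_abs]
    rw [abs_le]
    constructor
    · rw [le_div_iff₀ hx]; nlinarith
    · rw [div_le_iff₀ hx]; nlinarith
  have hfi : Integrable f F := ⟨hfm, HasFiniteIntegral.of_bounded hfb⟩
  have hgi : Integrable g F := ⟨hgm, HasFiniteIntegral.of_bounded hgb⟩
  have hzero : ∫ x, (f x - g x) ∂F = 0 := by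
    rw [integral_sub hfi hgi, h1, sub_self]
  have hnonneg : 0 ≤ᵐ[F] fun x => f x - g x := by
    filter_upwards [hae] with x hx
    exact le_of_lt (stmt12_aux x hx)
  have hiz := (integral_eq_zero_iff_of_nonneg_ae hnonneg (hfi.sub hgi)).mp hzero
  have : ∀ᵐ x ∂F, False := by
    filter_upwards [hae, hiz] with x hx hzx
    have := stmt12_aux x hx
    simp only [Pi.zero_apply] at hzx
    have hzx' : (1 - Real.exp (-1 * x)) - (Real.exp (-1 * x) - 1 + 1 * x) / x = 0 := hzx
    linarith
  rw [ae_iff] at this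
  simp only [not_false_eq_true, Set.setOf_true] at this
  exact hne (Measure.measure_univ_eq_zero.mp this)
end

section
/- Let f = (f_i)_{i≥1} be a summable nonnegative sequence with ν₀ = ∑ f_i and β_i = ∑_{j≥i} f_j/(j+1). If f is an equilibrium of Model D, then β₁ = (ν₀ − ν₀²)/2 and for all i ≥ 1: (1 + 2ν₀)·f_i = 2β_i + ∑_{j=1}^{i−1} f_j·f_{i−j}. -/
/-- If the summable nonnegative sequence `(f_i)_{i≥1}` is an equilibrium of Model D
(in weak form: for every bounded test sequence `φ`, the weak coagulation-fragmentation
form vanishes), then with `ν₀ = ∑_{i≥1} f_i` and `β_i = ∑_{j≥i} f_j/(j+1)` we have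
`β₁ = (ν₀ - ν₀²)/2` and `(1+2ν₀) f_i = 2 β_i + ∑_{j=1}^{i-1} f_j f_{i-j}` for all `i ≥ 1`. -/
theorem stmt15 (f : ℕ → ℝ) (ν₀ : ℝ) (β : ℕ → ℝ)
    (hpos : ∀ i, 0 ≤ f i)
    (hsum : Summable (fun i : ℕ => f (i + 1)))
    (hν : ν₀ = ∑' i : ℕ, f (i + 1))
    (hβ : ∀ i : ℕ, β i = ∑' k : ℕ, f (i + k) / ((i : ℝ) + k + 1))
    (hequil : ∀ φ : ℕ → ℝ, (∃ M : ℝ, ∀ i, |φ i| ≤ M) →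
      0 = (∑' i : ℕ, ∑' j : ℕ,
            (φ (i + j + 2) - φ (i + 1) - φ (j + 1)) * f (i + 1) * f (j + 1))
        + ∑' i : ℕ,
            (-(φ (i + 1)) +
              (2 / ((i : ℝ) + 2)) * ∑ j ∈ Finset.range (i + 1), φ (j + 1)) * f (i + 1)) :
    β 1 = (ν₀ - ν₀ ^ 2) / 2 ∧
    ∀ i : ℕ, 1 ≤ i →
      (1 + 2 * ν₀) * f i = 2 * β i + ∑ j ∈ Finset.Ico 1 i, f j * f (i - j) := by
  have hgnn : ∀ i : ℕ, 0 ≤ f (i + 1) := fun i => hpos _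
  -- summability of f(i+1)/(i+2)
  have hdiv : Summable (fun i : ℕ => f (i + 1) / ((i : ℝ) + 2)) := by
    apply Summable.of_nonneg_of_le (fun i => div_nonneg (hgnn i) (by positivity)) (fun i => ?_) hsum
    have h0 : (0:ℝ) ≤ (i : ℝ) := Nat.cast_nonneg i
    exact div_le_self (hgnn i) (by linarith)
  -- Part 1 : the test function φ ≡ 1
  have S1 := hequil (fun _ => 1) ⟨1, fun i => by norm_num⟩
  have e1 : (∑' i : ℕ, ∑' j : ℕ, ((1:ℝ) - 1 - 1) * f (i+1) * f (j+1)) = -(ν₀ * ν₀) := by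
    have h1 : ∀ i : ℕ, (∑' j : ℕ, ((1:ℝ) - 1 - 1) * f (i+1) * f (j+1))
        = -(f (i+1) * ν₀) := by
      intro i
      have : (fun j : ℕ => ((1:ℝ) - 1 - 1) * f (i+1) * f (j+1))
          = fun j : ℕ => -(f (i+1) * f (j+1)) := by funext j; ring
      rw [this, tsum_neg, tsum_mul_left, ← hν]
    rw [tsum_congr h1, tsum_neg, tsum_mul_right, ← hν]
  have e2 : (∑' i : ℕ, (-(1:ℝ) + (2 / ((i : ℝ) + 2)) * ∑ j ∈ Finset.range (i + 1), (1:ℝ)) * f (i+1))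
      = ν₀ - 2 * ∑' i : ℕ, f (i + 1) / ((i : ℝ) + 2) := by
    have h1 : ∀ i : ℕ, (-(1:ℝ) + (2 / ((i : ℝ) + 2)) * ∑ j ∈ Finset.range (i + 1), (1:ℝ)) * f (i+1)
        = f (i+1) - 2 * (f (i+1) / ((i : ℝ) + 2)) := by
      intro i
      have h0 : (0:ℝ) ≤ (i : ℝ) := Nat.cast_nonneg i
      have hne : ((i : ℝ) + 2) ≠ 0 := by linarith
      rw [Finset.sum_const, Finset.card_range]
      push_cast
      field_simp
      ring
    rw [tsum_congr h1, Summable.tsum_sub hsum (by simpa using hdiv.mul_left 2)]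
    rw [← hν, tsum_mul_left]
  rw [e1, e2] at S1
  have hβ1 : β 1 = ∑' i : ℕ, f (i + 1) / ((i : ℝ) + 2) := by
    rw [hβ 1]
    apply tsum_congr
    intro k
    rw [Nat.add_comm 1 k]
    push_cast
    ring_nf
  have part1 : β 1 = (ν₀ - ν₀ ^ 2) / 2 := by
    rw [hβ1]; nlinarith [S1]
  refine ⟨part1, ?_⟩
  -- Part 2
  intro m hm
  set φ : ℕ → ℝ := fun n => if n = m then (1:ℝ) else 0 with hφ
  have hφb : ∃ M : ℝ, ∀ i, |φ i| ≤ M := ⟨1, fun i => by simp only [hφ]; split <;> norm_num⟩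
  have S2 := hequil φ hφb
  -- Coagulation sum
  set C : ℝ := ∑ j ∈ Finset.Ico 1 m, f j * f (m - j) with hC
  -- the inner sum for fixed i
  have hsum1 : ∀ i : ℕ, Summable (fun j : ℕ => φ (i + j + 2) * f (i+1) * f (j+1)) := by
    intro i
    apply Summable.of_nonneg_of_le (fun j => ?_) (fun j => ?_) (hsum.mul_left (f (i+1)))
    · simp only [hφ]; split
      · exact mul_nonneg (mul_nonneg (by norm_num) (hgnn i)) (hgnn j)
      · simp
    · simp only [hφ]; split
      · rw [one_mul]
      · rw [zero_mul, zero_mul]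
        exact mul_nonneg (hgnn i) (hgnn j)
  have hsum3 : ∀ i : ℕ, Summable (fun j : ℕ => φ (j + 1) * f (i+1) * f (j+1)) := by
    intro i
    apply summable_of_ne_finset_zero (s := Finset.range m)
    intro j hj
    simp only [Finset.mem_range, not_lt] at hj
    have : j + 1 ≠ m := by omega
    simp [hφ, this]
  have inner_eq : ∀ i : ℕ,
      (∑' j : ℕ, (φ (i + j + 2) - φ (i + 1) - φ (j + 1)) * f (i+1) * f (j+1))
      = (if i + 2 ≤ m then f (i+1) * f (m - i - 1) else 0)
        - φ (i+1) * f (i+1) * ν₀ - f (i+1) * f m := by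
    intro i
    have hsplit : (fun j : ℕ => (φ (i + j + 2) - φ (i + 1) - φ (j + 1)) * f (i+1) * f (j+1))
        = fun j : ℕ => (φ (i + j + 2) * f (i+1) * f (j+1)
            - φ (i+1) * f (i+1) * f (j+1)) - φ (j + 1) * f (i+1) * f (j+1) := by
      funext j; ring
    rw [hsplit]
    rw [Summable.tsum_sub (Summable.sub (hsum1 i) (by simpa [mul_assoc] using hsum.mul_left (φ (i+1) * f (i+1)))) (hsum3 i)]
    rw [Summable.tsum_sub (hsum1 i) (by simpa [mul_assoc] using hsum.mul_left (φ (i+1) * f (i+1)))]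
    have t1 : (∑' j : ℕ, φ (i + j + 2) * f (i+1) * f (j+1))
        = if i + 2 ≤ m then f (i+1) * f (m - i - 1) else 0 := by
      by_cases h : i + 2 ≤ m
      · rw [if_pos h, tsum_eq_single (m - i - 2)]
        · have h1 : i + (m - i - 2) + 2 = m := by omega
          have h2 : m - i - 2 + 1 = m - i - 1 := by omega
          simp [hφ, h1, h2]
        · intro j hj
          have : i + j + 2 ≠ m := by omega
          simp [hφ, this]
      · rw [if_neg h]
        have : ∀ j : ℕ, φ (i + j + 2) * f (i+1) * f (j+1) = 0 := by
          intro j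
          have : i + j + 2 ≠ m := by omega
          simp [hφ, this]
        simp [this]
    have t2 : (∑' j : ℕ, φ (i+1) * f (i+1) * f (j+1)) = φ (i+1) * f (i+1) * ν₀ := by
      rw [hν]
      rw [show (fun j : ℕ => φ (i+1) * f (i+1) * f (j+1))
          = fun j : ℕ => (φ (i+1) * f (i+1)) * f (j+1) by funext j; ring, tsum_mul_left]
    have t3 : (∑' j : ℕ, φ (j + 1) * f (i+1) * f (j+1)) = f (i+1) * f m := by
      rw [tsum_eq_single (m - 1)]
      · have h1 : m - 1 + 1 = m := by omega
        simp [hφ, h1]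
      · intro j hj
        have : j + 1 ≠ m := by omega
        simp [hφ, this]
    rw [t1, t2, t3]
  -- summabilities for outer sum
  have so1 : Summable (fun i : ℕ => if i + 2 ≤ m then f (i+1) * f (m - i - 1) else 0) := by
    apply summable_of_ne_finset_zero (s := Finset.range m)
    intro i hi
    simp only [Finset.mem_range, not_lt] at hi
    rw [if_neg (by omega)]
  have so2 : Summable (fun i : ℕ => φ (i+1) * f (i+1) * ν₀) := by
    apply summable_of_ne_finset_zero (s := Finset.range m)
    intro i hi
    simp only [Finset.mem_range, not_lt] at hi
    have : i + 1 ≠ m := by omega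
    simp [hφ, this]
  have so3 : Summable (fun i : ℕ => f (i+1) * f m) := hsum.mul_right (f m)
  have outer_eq : (∑' i : ℕ, ∑' j : ℕ,
        (φ (i + j + 2) - φ (i + 1) - φ (j + 1)) * f (i + 1) * f (j + 1))
      = C - f m * ν₀ - ν₀ * f m := by
    rw [tsum_congr inner_eq, Summable.tsum_sub (Summable.sub so1 so2) so3, Summable.tsum_sub so1 so2]
    have o1 : (∑' i : ℕ, if i + 2 ≤ m then f (i+1) * f (m - i - 1) else 0) = C := by
      rw [tsum_eq_sum (s := Finset.range (m - 1)) ?_]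
      · rw [hC, Finset.sum_Ico_eq_sum_range]
        apply Finset.sum_congr rfl
        intro i hi
        simp only [Finset.mem_range] at hi
        rw [if_pos (by omega)]
        congr 2 <;> omega
      · intro i hi
        simp only [Finset.mem_range, not_lt] at hi
        rw [if_neg (by omega)]
    have o2 : (∑' i : ℕ, φ (i+1) * f (i+1) * ν₀) = f m * ν₀ := by
      rw [tsum_eq_single (m - 1)]
      · have h1 : m - 1 + 1 = m := by omega
        simp [hφ, h1]
      · intro i hi
        have : i + 1 ≠ m := by omega
        simp [hφ, this]
    have o3 : (∑' i : ℕ, f (i+1) * f m) = ν₀ * f m := by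
      rw [hν, tsum_mul_right]
    rw [o1, o2, o3]
  -- second (linear) term
  have lin_term : ∀ i : ℕ,
      (-(φ (i + 1)) + (2 / ((i : ℝ) + 2)) * ∑ j ∈ Finset.range (i + 1), φ (j + 1)) * f (i + 1)
      = -(φ (i+1) * f (i+1)) + (if m - 1 ≤ i then (2 / ((i : ℝ) + 2)) * f (i+1) else 0) := by
    intro i
    have hs : (∑ j ∈ Finset.range (i + 1), φ (j + 1)) = if m - 1 ≤ i then (1:ℝ) else 0 := by
      have : ∀ j : ℕ, φ (j + 1) = if j = m - 1 then (1:ℝ) else 0 := by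
        intro j
        simp only [hφ]
        by_cases h : j = m - 1
        · rw [if_pos h, if_pos (by omega)]
        · rw [if_neg h, if_neg (by omega)]
      rw [Finset.sum_congr rfl (fun j _ => this j), Finset.sum_ite_eq' (Finset.range (i+1)) (m-1) (fun _ => (1:ℝ))]
      by_cases h : m - 1 ≤ i
      · rw [if_pos (by simp; omega), if_pos h]
      · rw [if_neg (by simp; omega), if_neg h]
    rw [hs]
    by_cases h : m - 1 ≤ i
    · rw [if_pos h, if_pos h]; ring
    · rw [if_neg h, if_neg h]; ring
  have sb : Summable (fun i : ℕ => if m - 1 ≤ i then (2 / ((i : ℝ) + 2)) * f (i+1) else 0) := by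
    apply Summable.of_nonneg_of_le (fun i => ?_) (fun i => ?_) (hsum.mul_left 2)
    · split
      · exact mul_nonneg (div_nonneg (by norm_num) (by positivity)) (hgnn i)
      · exact le_refl 0
    · have h0 : (0:ℝ) ≤ (i : ℝ) := Nat.cast_nonneg i
      have hlt : (0:ℝ) < (i:ℝ) + 2 := by linarith
      have hh : 2 / ((i : ℝ) + 2) * f (i+1) ≤ 2 * f (i+1) := by
        apply mul_le_mul_of_nonneg_right _ (hgnn i)
        rw [div_le_iff₀ hlt]
        nlinarith
      split
      · exact hh
      · exact mul_nonneg (by norm_num) (hgnn i)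
  have sφf : Summable (fun i : ℕ => φ (i+1) * f (i+1)) := by
    apply summable_of_ne_finset_zero (s := Finset.range m)
    intro i hi
    simp only [Finset.mem_range, not_lt] at hi
    have : i + 1 ≠ m := by omega
    simp [hφ, this]
  have lin_eq : (∑' i : ℕ,
        (-(φ (i + 1)) + (2 / ((i : ℝ) + 2)) * ∑ j ∈ Finset.range (i + 1), φ (j + 1)) * f (i + 1))
      = -(f m) + 2 * β m := by
    rw [tsum_congr lin_term, Summable.tsum_add (sφf.neg) sb]
    have l1 : (∑' i : ℕ, -(φ (i+1) * f (i+1))) = -(f m) := by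
      rw [tsum_neg]
      congr 1
      rw [tsum_eq_single (m - 1)]
      · have h1 : m - 1 + 1 = m := by omega
        simp [hφ, h1]
      · intro i hi
        have : i + 1 ≠ m := by omega
        simp [hφ, this]
    have l2 : (∑' i : ℕ, if m - 1 ≤ i then (2 / ((i : ℝ) + 2)) * f (i+1) else 0) = 2 * β m := by
      rw [← Summable.sum_add_tsum_nat_add (m - 1) sb]
      have hz : (∑ i ∈ Finset.range (m-1), if m - 1 ≤ i then (2 / ((i : ℝ) + 2)) * f (i+1) else 0) = 0 := by
        apply Finset.sum_eq_zero
        intro i hi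
        simp only [Finset.mem_range] at hi
        rw [if_neg (by omega)]
      rw [hz, zero_add, hβ m, ← tsum_mul_left]
      apply tsum_congr
      intro k
      rw [if_pos (by omega)]
      have h1 : k + (m - 1) + 1 = m + k := by omega
      have h2 : ((k + (m - 1) : ℕ) : ℝ) = (k : ℝ) + (m : ℝ) - 1 := by
        have : ((m - 1 : ℕ) : ℝ) = (m : ℝ) - 1 := by
          rw [Nat.cast_sub hm]; norm_num
        push_cast [this]; ring
      rw [h1, h2]
      have h3 : (k:ℝ) + (m:ℝ) - 1 + 2 = (m:ℝ) + (k:ℝ) + 1 := by ring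
      rw [h3, div_mul_eq_mul_div, mul_div_assoc]
    rw [l1, l2]
  rw [outer_eq, lin_eq] at S2
  linarith [S2]
end
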